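/- arXiv:1412.2202 — 5 statements merged into one kernel-verified Lean document; each statement's English description precedes it below -/
import Mathlib

section
/- Suppose q is non-trivial, i.e. c_{n,m} ≠ 0 for some (n,m) with m < d. Then the set M = {(d − m)/(n − γ) : (n,m) a pair of nonnegative integers with c_{n,m} ≠ 0 and n > γ} is nonempty, its supremum m_f is strictly positive, and the supremum is attained (m_f = max M). Moreover, if A ≠ ∅, then min A exists and min A = m_f. -/
/-- Properties of `m_f` (Section 2 of Ueno): if `q` is non-trivial then the set
`M = {(d−m)/(n−γ) : c_{n,m} ≠ 0, n > γ}` is nonempty, its supremum `m_f` is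
strictly positive and attained, and if `A ≠ ∅` then `min A` exists and equals `m_f`. -/
theorem mf_properties
    (δ d γ : ℕ) (hδ : 2 ≤ δ) (hd : 1 ≤ d) (hγd : 2 ≤ γ + d)
    (b : ℂ) (hb : b ≠ 0)
    (R : ℝ) (hR : 0 < R)
    (c : ℕ → ℕ → ℂ)
    (hc : ∀ n m : ℕ, c n m ≠ 0 → 2 ≤ n + m ∧ (γ < n ∨ (n = γ ∧ d < m)))
    (q : ℂ → ℂ → ℂ)
    (hqsum : ∀ z w : ℂ, ‖z‖ < R → ‖w‖ < R →
      Summable (fun nm : ℕ × ℕ => c nm.1 nm.2 * z ^ nm.1 * w ^ nm.2))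
    (hq : ∀ z w : ℂ, ‖z‖ < R → ‖w‖ < R →
      q z w = b * z ^ γ * w ^ d + ∑' nm : ℕ × ℕ, c nm.1 nm.2 * z ^ nm.1 * w ^ nm.2)
    (hnontriv : ∃ n m : ℕ, c n m ≠ 0 ∧ m < d)
    (A : Set ℝ)
    (hA : A = {x : ℝ | 0 ≤ x ∧ x * γ + d ≤ δ ∧
      ∀ n m : ℕ, c n m ≠ 0 → x * γ + d ≤ x * n + m})
    (M : Set ℝ)
    (hM : M = {x : ℝ | ∃ n m : ℕ, c n m ≠ 0 ∧ γ < n ∧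
      x = ((d : ℝ) - (m : ℝ)) / ((n : ℝ) - (γ : ℝ))}) :
    M.Nonempty ∧ 0 < sSup M ∧ sSup M ∈ M ∧
      (A.Nonempty → IsLeast A (sSup M)) := by
  obtain ⟨n0, m0, hc0, hm0⟩ := hnontriv
  have hn0 : γ < n0 := by
    rcases (hc n0 m0 hc0).2 with h | ⟨_, h⟩
    · exact h
    · omega
  -- the finite set of candidate pairs
  set K : ℕ := γ + d * n0 with hK
  set F : Finset (ℕ × ℕ) :=
    ((Finset.range (K + 1)) ×ˢ (Finset.range (d + 1))).filter
      (fun p => c p.1 p.2 ≠ 0 ∧ γ < p.1) with hFdef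
  set v : ℕ × ℕ → ℝ := fun p => ((d : ℝ) - (p.2 : ℝ)) / ((p.1 : ℝ) - (γ : ℝ)) with hv
  have hF0 : (n0, m0) ∈ F := by
    simp only [hFdef, Finset.mem_filter, Finset.mem_product, Finset.mem_range]
    refine ⟨⟨?_, by omega⟩, hc0, hn0⟩
    have : n0 ≤ d * n0 := Nat.le_mul_of_pos_left n0 hd
    omega
  have hFne : F.Nonempty := ⟨_, hF0⟩
  set μ : ℝ := F.sup' hFne v with hμdef
  have hvpos : ∀ n m : ℕ, γ < n → m < d → 0 < v (n, m) := by
    intro n m hn hm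
    apply div_pos <;> simp [hv] <;> [exact_mod_cast hm; exact_mod_cast hn]
  have hx0 : 0 < v (n0, m0) := hvpos n0 m0 hn0 hm0
  have hμ0 : 0 < μ := lt_of_lt_of_le hx0 (Finset.le_sup' v hF0)
  have hμM : μ ∈ M := by
    obtain ⟨p, hp, hpv⟩ := Finset.exists_mem_eq_sup' hFne v
    simp only [hFdef, Finset.mem_filter, Finset.mem_product, Finset.mem_range] at hp
    rw [hM]
    exact ⟨p.1, p.2, hp.2.1, hp.2.2, hpv⟩
  -- μ is an upper bound of M
  have hub : ∀ x ∈ M, x ≤ μ := by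
    rw [hM]
    rintro x ⟨n, m, hcnm, hn, rfl⟩
    have hnpos : (0 : ℝ) < (n : ℝ) - (γ : ℝ) := by
      have : (γ : ℝ) < n := by exact_mod_cast hn
      linarith
    by_cases hm : m < d
    · by_cases hnK : n ≤ K
      · have : (n, m) ∈ F := by
          simp only [hFdef, Finset.mem_filter, Finset.mem_product, Finset.mem_range]
          exact ⟨⟨by omega, by omega⟩, hcnm, hn⟩
        exact Finset.le_sup' v this
      · -- n is large, so the value is below v (n0, m0) ≤ μ
        have h1 : ((d : ℝ) - m) / ((n : ℝ) - γ) ≤ v (n0, m0) := by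
          have hn0pos : (0 : ℝ) < (n0 : ℝ) - (γ : ℝ) := by
            have : (γ : ℝ) < n0 := by exact_mod_cast hn0
            linarith
          rw [hv]
          rw [div_le_div_iff₀ hnpos hn0pos]
          have hm' : (m : ℝ) + 1 ≤ d := by exact_mod_cast hm
          have hm0' : (m0 : ℝ) + 1 ≤ d := by exact_mod_cast hm0
          have hnbig : (γ : ℝ) + d * n0 + 1 ≤ n := by
            have : K + 1 ≤ n := by omega
            have h2 := (Nat.cast_le (α := ℝ)).2 this
            rw [hK] at h2
            push_cast at h2 ⊢
            linarith
          have hm0nn : (0 : ℝ) ≤ m0 := Nat.cast_nonneg m0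
          have hmn : (0 : ℝ) ≤ m := Nat.cast_nonneg m
          have hdg : (0 : ℝ) ≤ (d : ℝ) * γ := by positivity
          nlinarith [mul_nonneg hmn (le_of_lt hn0pos),
            mul_nonneg (by linarith : (0:ℝ) ≤ (d:ℝ) - m0 - 1) (le_of_lt hnpos)]
        exact h1.trans (Finset.le_sup' v hF0)
    · have : ((d : ℝ) - m) / ((n : ℝ) - γ) ≤ 0 := by
        apply div_nonpos_of_nonpos_of_nonneg
        · have : (d : ℝ) ≤ m := by exact_mod_cast Nat.le_of_not_lt hm
          linarith
        · linarith
      linarith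
  have hMne : M.Nonempty := ⟨μ, hμM⟩
  have hSup : sSup M = μ :=
    le_antisymm (csSup_le hMne hub) (le_csSup ⟨μ, hub⟩ hμM)
  -- every element of A is an upper bound of M
  have hAub : ∀ a ∈ A, ∀ x ∈ M, x ≤ a := by
    rw [hA, hM]
    rintro a ⟨ha0, haδ, ha⟩ x ⟨n, m, hcnm, hn, rfl⟩
    have hnpos : (0 : ℝ) < (n : ℝ) - (γ : ℝ) := by
      have : (γ : ℝ) < n := by exact_mod_cast hn
      linarith
    rw [div_le_iff₀ hnpos]
    have := ha n m hcnm
    linarith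
  refine ⟨hMne, by rw [hSup]; exact hμ0, by rw [hSup]; exact hμM, ?_⟩
  rintro ⟨a, haA⟩
  rw [hSup]
  constructor
  · -- μ ∈ A
    have hμa : μ ≤ a := hAub a haA μ hμM
    rw [hA] at haA ⊢
    obtain ⟨ha0, haδ, ha⟩ := haA
    refine ⟨le_of_lt hμ0, ?_, ?_⟩
    · have : μ * γ ≤ a * γ := by
        apply mul_le_mul_of_nonneg_right hμa (Nat.cast_nonneg γ)
      linarith
    · intro n m hcnm
      rcases (hc n m hcnm).2 with hn | ⟨hne, hdm⟩
      · have hnpos : (0 : ℝ) < (n : ℝ) - (γ : ℝ) := by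
          have : (γ : ℝ) < n := by exact_mod_cast hn
          linarith
        by_cases hm : m < d
        · have hxM : ((d : ℝ) - m) / ((n : ℝ) - γ) ∈ M := by
            rw [hM]; exact ⟨n, m, hcnm, hn, rfl⟩
          have := hub _ hxM
          rw [div_le_iff₀ hnpos] at this
          linarith
        · have hdm' : (d : ℝ) ≤ m := by exact_mod_cast Nat.le_of_not_lt hm
          nlinarith
      · subst hne
        have : (d : ℝ) ≤ m := by exact_mod_cast le_of_lt hdm
        linarith
  · -- μ is a lower bound of A
    intro a' ha'
    exact hAub a' ha' μ hμM
end

section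
/- Let n ≥ 1 and let (z,w) ∈ D with z ≠ 0 and w ≠ 0 be such that for every j with 0 ≤ j < n the iterate f^j(z,w) lies in D and has both coordinates nonzero. Then, writing f^n(z,w) = (P_n, Q_n), one has P_n = z^{δ^n} · Π_{j=1}^{n} (1 + ζ(p^{j−1}(z)))^{δ^{n−j}} and Q_n = z^{γ_n} · w^{d^n} · Π_{j=1}^{n−1} (1 + ζ(p^{j−1}(z)))^{γ_{n−j}} · Π_{j=1}^{n} (1 + η(f^{j−1}(z,w)))^{d^{n−j}}, where p^{j−1} denotes the (j−1)-st iterate of p. -/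
/-- Explicit formula for the iterates of the skew product `f = (p, q)`
(Section 3 of Ueno): writing `p(z) = z^δ(1 + ζ(z))` and
`q(z,w) = z^γ w^d (1 + η(z,w))`, the `n`-th iterate of `f` has components
`P_n = z^{δ^n} ∏_{j=1}^n (1 + ζ(p^{j−1}(z)))^{δ^{n−j}}` and
`Q_n = z^{γ_n} w^{d^n} ∏_{j=1}^{n−1} (1 + ζ(p^{j−1}(z)))^{γ_{n−j}}
        ∏_{j=1}^n (1 + η(f^{j−1}(z,w)))^{d^{n−j}}`,
provided all the intermediate iterates stay in the polydisc `D` and have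
nonzero coordinates. -/
theorem iterate_formula
    (δ d γ : ℕ) (hδ : 2 ≤ δ) (hd : 2 ≤ d)
    (R : ℝ) (hR : 0 < R)
    (a : ℕ → ℂ) (ha : ∀ k : ℕ, k ≤ δ → a k = 0)
    (c : ℕ → ℕ → ℂ)
    (hc : ∀ n m : ℕ, c n m ≠ 0 → 2 ≤ n + m ∧ (γ < n ∨ (n = γ ∧ d < m)))
    (p : ℂ → ℂ) (q : ℂ → ℂ → ℂ)
    (D : Set (ℂ × ℂ))
    (hD : D = {zw : ℂ × ℂ | ‖zw.1‖ < R ∧ ‖zw.2‖ < R})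
    (hpsum : ∀ z : ℂ, ‖z‖ < R → Summable (fun k : ℕ => a k * z ^ k))
    (hp : ∀ z : ℂ, ‖z‖ < R → p z = z ^ δ + ∑' k : ℕ, a k * z ^ k)
    (hqsum : ∀ z w : ℂ, ‖z‖ < R → ‖w‖ < R →
      Summable (fun nm : ℕ × ℕ => c nm.1 nm.2 * z ^ nm.1 * w ^ nm.2))
    (hq : ∀ z w : ℂ, ‖z‖ < R → ‖w‖ < R →
      q z w = z ^ γ * w ^ d + ∑' nm : ℕ × ℕ, c nm.1 nm.2 * z ^ nm.1 * w ^ nm.2)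
    (f : ℂ × ℂ → ℂ × ℂ) (hf : ∀ zw : ℂ × ℂ, f zw = (p zw.1, q zw.1 zw.2))
    (ζ : ℂ → ℂ) (hζ : ∀ z : ℂ, z ≠ 0 → ζ z = p z / z ^ δ - 1)
    (η : ℂ × ℂ → ℂ)
    (hη : ∀ zw : ℂ × ℂ, zw.1 ≠ 0 → zw.2 ≠ 0 →
      η zw = q zw.1 zw.2 / (zw.1 ^ γ * zw.2 ^ d) - 1)
    (gam : ℕ → ℕ)
    (hgam : ∀ n : ℕ, gam n = γ * ∑ i ∈ Finset.Icc 1 n, δ ^ (n - i) * d ^ (i - 1)) :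
    ∀ n : ℕ, 1 ≤ n → ∀ zw : ℂ × ℂ,
      (∀ j : ℕ, j < n →
        f^[j] zw ∈ D ∧ (f^[j] zw).1 ≠ 0 ∧ (f^[j] zw).2 ≠ 0) →
      (f^[n] zw).1 = zw.1 ^ (δ ^ n) *
          ∏ j ∈ Finset.Icc 1 n, (1 + ζ (p^[j - 1] zw.1)) ^ (δ ^ (n - j)) ∧
      (f^[n] zw).2 = zw.1 ^ gam n * zw.2 ^ (d ^ n) *
          (∏ j ∈ Finset.Icc 1 (n - 1), (1 + ζ (p^[j - 1] zw.1)) ^ gam (n - j)) *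
          ∏ j ∈ Finset.Icc 1 n, (1 + η (f^[j - 1] zw)) ^ (d ^ (n - j)) := by
  have hgam0 : gam 0 = 0 := by simp [hgam]
  have hpz : ∀ z : ℂ, z ≠ 0 → p z = z ^ δ * (1 + ζ z) := by
    intro z hz
    rw [hζ z hz]
    field_simp
    ring
  have hqz : ∀ zw : ℂ × ℂ, zw.1 ≠ 0 → zw.2 ≠ 0 →
      q zw.1 zw.2 = zw.1 ^ γ * zw.2 ^ d * (1 + η zw) := by
    intro zw h1 h2
    rw [hη zw h1 h2]
    field_simp
    ring
  have hfst : ∀ (k : ℕ) (zw : ℂ × ℂ), (f^[k] zw).1 = p^[k] zw.1 := by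
    intro k
    induction k with
    | zero => intro zw; simp
    | succ k ih =>
      intro zw
      simp [Function.iterate_succ_apply', hf, ih]
  have hsum_shift : ∀ m : ℕ, ∑ i ∈ Finset.Icc 1 m, δ ^ (m - i) * d ^ (i - 1)
      = ∑ i ∈ Finset.range m, δ ^ (m - 1 - i) * d ^ i := by
    intro m
    rw [← Finset.Ico_add_one_right_eq_Icc, Finset.sum_Ico_eq_sum_range]
    apply Finset.sum_congr (by norm_num)
    intro i _
    congr 2
    · omega
    · omega
  have hgamrec : ∀ k : ℕ, gam (k + 1) = γ * δ ^ k + d * gam k := by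
    intro k
    rw [hgam, hgam, hsum_shift, hsum_shift, Finset.sum_range_succ']
    have h1 : ∑ i ∈ Finset.range k, δ ^ (k + 1 - 1 - (i + 1)) * d ^ (i + 1)
        = d * ∑ i ∈ Finset.range k, δ ^ (k - 1 - i) * d ^ i := by
      rw [Finset.mul_sum]
      apply Finset.sum_congr rfl
      intro i _
      have h2 : k + 1 - 1 - (i + 1) = k - 1 - i := by omega
      rw [h2, pow_succ]
      ring
    rw [h1]
    have h3 : k + 1 - 1 - 0 = k := by omega
    rw [h3, pow_zero, mul_one, Nat.mul_add]
    ring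
  intro n hn
  induction n, hn using Nat.le_induction with
  | base =>
    intro zw hzw
    obtain ⟨_, hz, hw⟩ := hzw 0 (by norm_num)
    simp only [Function.iterate_zero_apply] at hz hw
    rw [Function.iterate_one, hf]
    have hg1 : gam 1 = γ := by rw [hgam]; simp
    constructor
    · simp only [Finset.Icc_self, Finset.prod_singleton]
      norm_num [hpz zw.1 hz]
    · simp only [Finset.Icc_self, Finset.prod_singleton]
      norm_num [hqz zw hz hw, hg1]
  | succ n hn ih =>
    obtain ⟨m, rfl⟩ : ∃ m, n = m + 1 := ⟨n - 1, by omega⟩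
    intro zw hzw
    obtain ⟨ihP, ihQ⟩ := ih zw (fun j hj => hzw j (by omega))
    obtain ⟨_, hz, hw⟩ := hzw (m + 1) (by omega)
    have hstep : f^[m + 1 + 1] zw = f (f^[m + 1] zw) :=
      Function.iterate_succ_apply' f (m + 1) zw
    have hP0 : (f^[m + 1 + 1] zw).1 = p ((f^[m + 1] zw).1) := by rw [hstep, hf]
    have hQ0 : (f^[m + 1 + 1] zw).2 = q ((f^[m + 1] zw).1) ((f^[m + 1] zw).2) := by
      rw [hstep, hf]
    constructor
    · have hP1 : (f^[m + 1 + 1] zw).1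
          = (zw.1 ^ δ ^ (m + 1) *
              ∏ j ∈ Finset.Icc 1 (m + 1), (1 + ζ (p^[j - 1] zw.1)) ^ δ ^ (m + 1 - j)) ^ δ *
            (1 + ζ (p^[m + 1] zw.1)) := by
        rw [hP0, hpz _ hz]
        congr 1
        · rw [ihP]
        · rw [hfst]
      rw [hP1, Finset.prod_Icc_succ_top (by omega : 1 ≤ m + 1 + 1)]
      have eA : (zw.1 ^ δ ^ (m + 1)) ^ δ = zw.1 ^ δ ^ (m + 1 + 1) := by
        rw [← pow_mul, ← pow_succ]
      have eB : (∏ j ∈ Finset.Icc 1 (m + 1), (1 + ζ (p^[j - 1] zw.1)) ^ δ ^ (m + 1 - j)) ^ δ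
          = ∏ j ∈ Finset.Icc 1 (m + 1), (1 + ζ (p^[j - 1] zw.1)) ^ δ ^ (m + 1 + 1 - j) := by
        rw [← Finset.prod_pow]
        apply Finset.prod_congr rfl
        intro j hj
        have hj2 := (Finset.mem_Icc.mp hj).2
        have h : m + 1 + 1 - j = (m + 1 - j) + 1 := by omega
        rw [← pow_mul, ← pow_succ, h]
      rw [mul_pow, eA, eB]
      simp only [Nat.add_sub_cancel, Nat.sub_self, pow_zero, pow_one]
      ring
    · have hQ1 : (f^[m + 1 + 1] zw).2
          = (zw.1 ^ δ ^ (m + 1) *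
              ∏ j ∈ Finset.Icc 1 (m + 1), (1 + ζ (p^[j - 1] zw.1)) ^ δ ^ (m + 1 - j)) ^ γ *
            (zw.1 ^ gam (m + 1) * zw.2 ^ d ^ (m + 1) *
              (∏ j ∈ Finset.Icc 1 (m + 1 - 1), (1 + ζ (p^[j - 1] zw.1)) ^ gam (m + 1 - j)) *
              ∏ j ∈ Finset.Icc 1 (m + 1), (1 + η (f^[j - 1] zw)) ^ d ^ (m + 1 - j)) ^ d *
            (1 + η (f^[m + 1] zw)) := by
        rw [hQ0, hqz _ hz hw, ihP, ihQ]
      rw [hQ1]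
      have hm1 : m + 1 + 1 - 1 = m + 1 := rfl
      have hm2 : m + 1 - 1 = m := rfl
      rw [hm1, hm2]
      have ez : (zw.1 ^ δ ^ (m + 1)) ^ γ * (zw.1 ^ gam (m + 1)) ^ d
          = zw.1 ^ gam (m + 1 + 1) := by
        have hg2 : gam (m + 1 + 1) = δ ^ (m + 1) * γ + gam (m + 1) * d := by
          rw [hgamrec]; ring
        rw [← pow_mul, ← pow_mul, ← pow_add, hg2]
      have ew : (zw.2 ^ d ^ (m + 1)) ^ d = zw.2 ^ d ^ (m + 1 + 1) := by
        rw [← pow_mul, ← pow_succ]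
      have eζ : (∏ j ∈ Finset.Icc 1 (m + 1), (1 + ζ (p^[j - 1] zw.1)) ^ δ ^ (m + 1 - j)) ^ γ *
            (∏ j ∈ Finset.Icc 1 m, (1 + ζ (p^[j - 1] zw.1)) ^ gam (m + 1 - j)) ^ d
          = ∏ j ∈ Finset.Icc 1 (m + 1), (1 + ζ (p^[j - 1] zw.1)) ^ gam (m + 1 + 1 - j) := by
        have ext : (∏ j ∈ Finset.Icc 1 m, (1 + ζ (p^[j - 1] zw.1)) ^ gam (m + 1 - j))
            = ∏ j ∈ Finset.Icc 1 (m + 1), (1 + ζ (p^[j - 1] zw.1)) ^ gam (m + 1 - j) := by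
          rw [Finset.prod_Icc_succ_top (by omega : 1 ≤ m + 1), Nat.sub_self, hgam0,
            pow_zero, mul_one]
        rw [ext, ← Finset.prod_pow, ← Finset.prod_pow, ← Finset.prod_mul_distrib]
        apply Finset.prod_congr rfl
        intro j hj
        have hj2 := (Finset.mem_Icc.mp hj).2
        have h : m + 1 + 1 - j = (m + 1 - j) + 1 := by omega
        rw [← pow_mul, ← pow_mul, ← pow_add, h, hgamrec]
        have h2 : δ ^ (m + 1 - j) * γ + gam (m + 1 - j) * d
            = γ * δ ^ (m + 1 - j) + d * gam (m + 1 - j) := by ring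
        rw [h2]
      have eη : (∏ j ∈ Finset.Icc 1 (m + 1), (1 + η (f^[j - 1] zw)) ^ d ^ (m + 1 - j)) ^ d *
            (1 + η (f^[m + 1] zw))
          = ∏ j ∈ Finset.Icc 1 (m + 1 + 1), (1 + η (f^[j - 1] zw)) ^ d ^ (m + 1 + 1 - j) := by
        rw [Finset.prod_Icc_succ_top (by omega : 1 ≤ m + 1 + 1), Nat.sub_self, pow_zero,
          pow_one, hm1, ← Finset.prod_pow]
        congr 1
        apply Finset.prod_congr rfl
        intro j hj
        have hj2 := (Finset.mem_Icc.mp hj).2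
        have h : m + 1 + 1 - j = (m + 1 - j) + 1 := by omega
        rw [← pow_mul, ← pow_succ, h]
      rw [mul_pow, mul_pow, mul_pow, mul_pow]
      calc (zw.1 ^ δ ^ (m + 1)) ^ γ *
            (∏ j ∈ Finset.Icc 1 (m + 1), (1 + ζ (p^[j - 1] zw.1)) ^ δ ^ (m + 1 - j)) ^ γ *
            ((zw.1 ^ gam (m + 1)) ^ d * (zw.2 ^ d ^ (m + 1)) ^ d *
              (∏ j ∈ Finset.Icc 1 m, (1 + ζ (p^[j - 1] zw.1)) ^ gam (m + 1 - j)) ^ d *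
              (∏ j ∈ Finset.Icc 1 (m + 1), (1 + η (f^[j - 1] zw)) ^ d ^ (m + 1 - j)) ^ d) *
            (1 + η (f^[m + 1] zw))
          = ((zw.1 ^ δ ^ (m + 1)) ^ γ * (zw.1 ^ gam (m + 1)) ^ d) *
            ((zw.2 ^ d ^ (m + 1)) ^ d) *
            ((∏ j ∈ Finset.Icc 1 (m + 1), (1 + ζ (p^[j - 1] zw.1)) ^ δ ^ (m + 1 - j)) ^ γ *
              (∏ j ∈ Finset.Icc 1 m, (1 + ζ (p^[j - 1] zw.1)) ^ gam (m + 1 - j)) ^ d) *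
            ((∏ j ∈ Finset.Icc 1 (m + 1), (1 + η (f^[j - 1] zw)) ^ d ^ (m + 1 - j)) ^ d *
              (1 + η (f^[m + 1] zw))) := by ring
        _ = _ := by rw [ez, ew, eζ, eη]
end

section
/- Let A < B be real numbers and ε > 0. Let g be a holomorphic function on the strip S = {W ∈ ℂ : A < Re W < B} satisfying |g(W) − W| < ε for all W ∈ S. Then g is injective on the substrip S' = {W ∈ ℂ : A + 2ε < Re W < B − 2ε}. -/
open Metric Set

/-- A holomorphic function on a vertical strip `{A < Re W < B}` that is uniformly
within `ε` of the identity is injective on the substrip `{A + 2ε < Re W < B − 2ε}`. -/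
theorem injective_on_substrip
    (A B ε : ℝ) (hAB : A < B) (hε : 0 < ε)
    (g : ℂ → ℂ)
    (hg : DifferentiableOn ℂ g {W : ℂ | A < W.re ∧ W.re < B})
    (hclose : ∀ W ∈ {W : ℂ | A < W.re ∧ W.re < B}, ‖g W - W‖ < ε) :
    Set.InjOn g {W : ℂ | A + 2 * ε < W.re ∧ W.re < B - 2 * ε} := by
  set S : Set ℂ := {W : ℂ | A < W.re ∧ W.re < B}
  set S' : Set ℂ := {W : ℂ | A + 2 * ε < W.re ∧ W.re < B - 2 * ε}
  have hSopen : IsOpen S :=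
    (isOpen_lt continuous_const Complex.continuous_re).inter
      (isOpen_lt Complex.continuous_re continuous_const)
  have hS'S : S' ⊆ S := fun z hz => ⟨by nlinarith [hz.1], by nlinarith [hz.2]⟩
  set h : ℂ → ℂ := fun W => g W - W with hh
  have hhd : DifferentiableOn ℂ h S := hg.sub differentiableOn_id
  -- closed ball of radius 2ε around a point of S' is in S
  have hball : ∀ c ∈ S', closedBall c (2 * ε) ⊆ S := by
    intro c hc z hz
    rw [mem_closedBall, Complex.dist_eq] at hz
    have := Complex.abs_re_le_norm (z - c)
    have h1 : |z.re - c.re| ≤ 2 * ε := by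
      simpa [Complex.sub_re] using this.trans hz
    rw [abs_le] at h1
    exact ⟨by nlinarith [hc.1], by nlinarith [hc.2]⟩
  -- derivative bound on S'
  have hderiv : ∀ c ∈ S', ‖deriv h c‖ ≤ 1 / 2 := by
    intro c hc
    have h2ε : (0 : ℝ) < 2 * ε := by linarith
    have hd : DiffContOnCl ℂ h (ball c (2 * ε)) := by
      apply DifferentiableOn.diffContOnCl
      rw [closure_ball c h2ε.ne']
      exact hhd.mono (hball c hc)
    have := Complex.norm_deriv_le_of_forall_mem_sphere_norm_le h2ε hd
      (C := ε) (fun z hz => by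
        have hzS : z ∈ S := hball c hc (sphere_subset_closedBall hz)
        exact (hclose z hzS).le)
    calc ‖deriv h c‖ ≤ ε / (2 * ε) := this
      _ = 1 / 2 := by field_simp
  have hconv : Convex ℝ S' :=
    (convex_halfSpace_re_gt (A + 2 * ε)).inter (convex_halfSpace_re_lt (B - 2 * ε))
  intro x hx y hy hxy
  have hdiffAt : ∀ z ∈ S', DifferentiableAt ℂ h z := fun z hz =>
    (hhd.differentiableAt (hSopen.mem_nhds (hS'S hz)))
  have key : ‖h y - h x‖ ≤ 1 / 2 * ‖y - x‖ :=
    hconv.norm_image_sub_le_of_norm_deriv_le hdiffAt hderiv hx hy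
  have heq : h y - h x = x - y := by
    simp only [hh]
    rw [hxy]; ring
  rw [heq] at key
  have : ‖x - y‖ = ‖y - x‖ := norm_sub_rev x y
  rw [this] at key
  have : ‖y - x‖ = 0 := by linarith [norm_nonneg (y - x)]
  have := sub_eq_zero.mp (norm_eq_zero.mp this)
  exact this.symm
end

section
/- Let m, n ∈ ℂ and let L = {(Z, mZ + n) : Z ∈ ℂ}, and suppose L ∩ V' ≠ ∅. If |m| ≤ 1, then dist(S₁', ∂S₁) ≥ 2ε, where S₁ = {Z ∈ ℂ : (Z, mZ + n) ∈ V} and S₁' = {Z ∈ ℂ : (Z, mZ + n) ∈ V'}. If |m| ≥ 1 (so in particular m ≠ 0), then dist(S₂', ∂S₂) ≥ 2ε, where S₂ = {W ∈ ℂ : ((W − n)/m, W) ∈ V} and S₂' = {W ∈ ℂ : ((W − n)/m, W) ∈ V'}. -/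
/-- Lemma 6.3 of Ueno: for a complex line `L = {W = mZ + n}` meeting `V'`, the
slice of `V'` along `L` (in the `Z`-coordinate if `|m| ≤ 1`, in the
`W`-coordinate if `|m| ≥ 1`) lies at distance at least `2ε` from the boundary
of the corresponding slice of `V`. -/
theorem slice_distance
    (α ε r₁ r₂ : ℝ) (hα : 0 < α) (hε : 0 < ε) (hr₁ : 0 < r₁) (hr₂ : 0 < r₂)
    (V V' : Set (ℂ × ℂ))
    (hV : V = {ZW : ℂ × ℂ |
      (ZW.1.re - Real.log r₁) / α < ZW.2.re ∧ ZW.2.re < Real.log r₂})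
    (hV' : V' = {ZW : ℂ × ℂ |
      (ZW.1.re - Real.log r₁) / α + 2 * ε * (1 + α) / α < ZW.2.re ∧
      ZW.2.re < Real.log r₂ - 2 * ε})
    (m n : ℂ)
    (hL : ∃ Z : ℂ, (Z, m * Z + n) ∈ V') :
    (‖m‖ ≤ 1 →
      ∀ x ∈ {Z : ℂ | (Z, m * Z + n) ∈ V'},
        ∀ y ∈ frontier {Z : ℂ | (Z, m * Z + n) ∈ V}, 2 * ε ≤ dist x y) ∧
    (1 ≤ ‖m‖ →
      ∀ x ∈ {W : ℂ | ((W - n) / m, W) ∈ V'},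
        ∀ y ∈ frontier {W : ℂ | ((W - n) / m, W) ∈ V}, 2 * ε ≤ dist x y) := by
  subst hV hV'
  constructor
  · -- case |m| ≤ 1, slice in Z
    intro hm x hx y hy
    have hset : {Z : ℂ | (Z, m * Z + n) ∈
        {ZW : ℂ × ℂ | (ZW.1.re - Real.log r₁) / α < ZW.2.re ∧ ZW.2.re < Real.log r₂}}
        = {Z : ℂ | (Z.re - Real.log r₁) / α < (m * Z + n).re ∧
            (m * Z + n).re < Real.log r₂} := rfl
    rw [hset] at hy
    have hcont : Continuous fun Z : ℂ => (m * Z + n).re := by fun_prop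
    have hopen : IsOpen {Z : ℂ | (Z.re - Real.log r₁) / α < (m * Z + n).re ∧
        (m * Z + n).re < Real.log r₂} :=
      (isOpen_lt (by fun_prop) hcont).inter (isOpen_lt hcont continuous_const)
    have hy' : y ∉ {Z : ℂ | (Z.re - Real.log r₁) / α < (m * Z + n).re ∧
        (m * Z + n).re < Real.log r₂} := by
      rw [hopen.frontier_eq] at hy; exact hy.2
    simp only [Set.mem_setOf_eq, not_and_or, not_lt] at hy'
    simp only [Set.mem_setOf_eq] at hx
    obtain ⟨hx1, hx2⟩ := hx
    have hd : dist x y = ‖x - y‖ := Complex.dist_eq x y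
    have hdnn : 0 ≤ ‖x - y‖ := norm_nonneg _
    -- bound on Re(m*(x-y))
    have hre : |(m * (x - y)).re| ≤ ‖x - y‖ := by
      calc |(m * (x - y)).re| ≤ ‖m * (x - y)‖ := Complex.abs_re_le_norm _
        _ = ‖m‖ * ‖x - y‖ := norm_mul _ _
        _ ≤ 1 * ‖x - y‖ := by
            exact mul_le_mul_of_nonneg_right hm hdnn
        _ = ‖x - y‖ := one_mul _
    have hre' := abs_le.mp hre
    have hre2 := abs_le.mp (Complex.abs_re_le_norm (x - y))
    have hmre : (m * (x - y)).re = (m * x + n).re - (m * y + n).re := by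
      simp [mul_sub, Complex.sub_re, Complex.add_re]
    have hsre : (x - y).re = x.re - y.re := Complex.sub_re x y
    rw [hd]
    rcases hy' with h | h
    · -- lower boundary: (m*y+n).re ≤ (y.re - log r₁)/α
      have hx1' : x.re - Real.log r₁ + 2 * ε * (1 + α) < (m * x + n).re * α := by
        rw [← add_div] at hx1
        have := (div_lt_iff₀ hα).mp hx1
        linarith
      have h' : (m * y + n).re * α ≤ y.re - Real.log r₁ := by
        have := (le_div_iff₀ hα).mp h
        linarith
      have hmul : ((m * x + n).re - (m * y + n).re) * α ≤ ‖x - y‖ * α := by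
        apply mul_le_mul_of_nonneg_right _ hα.le
        rw [← hmre]; exact hre'.2
      nlinarith [hre2.1, hre2.2]
    · -- upper boundary: log r₂ ≤ (m*y+n).re
      have : 2 * ε < (m * y + n).re - (m * x + n).re := by linarith
      have h2 : (m * y + n).re - (m * x + n).re ≤ ‖x - y‖ := by
        have := hre'.1
        rw [hmre] at this
        linarith
      linarith
  · -- case |m| ≥ 1, slice in W
    intro hm x hx y hy
    have hm0 : m ≠ 0 := by
      intro h; rw [h] at hm; simp at hm; linarith
    have hset : {W : ℂ | ((W - n) / m, W) ∈
        {ZW : ℂ × ℂ | (ZW.1.re - Real.log r₁) / α < ZW.2.re ∧ ZW.2.re < Real.log r₂}}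
        = {W : ℂ | (((W - n) / m).re - Real.log r₁) / α < W.re ∧
            W.re < Real.log r₂} := rfl
    rw [hset] at hy
    have hcont : Continuous fun W : ℂ => (((W - n) / m).re - Real.log r₁) / α := by
      apply Continuous.div_const
      apply Continuous.sub _ continuous_const
      exact Complex.continuous_re.comp ((continuous_id.sub continuous_const).div_const m)
    have hopen : IsOpen {W : ℂ | (((W - n) / m).re - Real.log r₁) / α < W.re ∧
        W.re < Real.log r₂} :=
      (isOpen_lt hcont Complex.continuous_re).inter
        (isOpen_lt Complex.continuous_re continuous_const)
    have hy' : y ∉ {W : ℂ | (((W - n) / m).re - Real.log r₁) / α < W.re ∧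
        W.re < Real.log r₂} := by
      rw [hopen.frontier_eq] at hy; exact hy.2
    simp only [Set.mem_setOf_eq, not_and_or, not_lt] at hy'
    simp only [Set.mem_setOf_eq] at hx
    obtain ⟨hx1, hx2⟩ := hx
    have hd : dist x y = ‖x - y‖ := Complex.dist_eq x y
    have hdnn : 0 ≤ ‖x - y‖ := norm_nonneg _
    have hre : |((x - y) / m).re| ≤ ‖x - y‖ := by
      calc |((x - y) / m).re| ≤ ‖(x - y) / m‖ := Complex.abs_re_le_norm _
        _ = ‖x - y‖ / ‖m‖ := norm_div _ _
        _ ≤ ‖x - y‖ / 1 := by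
            apply div_le_div_of_nonneg_left hdnn one_pos hm
        _ = ‖x - y‖ := div_one _
    have hre' := abs_le.mp hre
    have hre2 := abs_le.mp (Complex.abs_re_le_norm (x - y))
    have hmre : ((x - y) / m).re = ((x - n) / m).re - ((y - n) / m).re := by
      rw [show (x - y) / m = (x - n) / m - (y - n) / m by ring]
      exact Complex.sub_re _ _
    have hsre : (x - y).re = x.re - y.re := Complex.sub_re x y
    rw [hd]
    rcases hy' with h | h
    · have hx1' : ((x - n) / m).re - Real.log r₁ + 2 * ε * (1 + α) < x.re * α := by
        rw [← add_div] at hx1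
        have := (div_lt_iff₀ hα).mp hx1
        linarith
      have h' : y.re * α ≤ ((y - n) / m).re - Real.log r₁ := by
        have := (le_div_iff₀ hα).mp h
        linarith
      have hmul : (x.re - y.re) * α ≤ ‖x - y‖ * α := by
        apply mul_le_mul_of_nonneg_right _ hα.le
        rw [← hsre]; exact hre2.2
      nlinarith [hre'.1, hre'.2]
    · have : 2 * ε < y.re - x.re := by linarith
      have h2 : y.re - x.re ≤ ‖x - y‖ := by
        have := hre2.1; linarith
      linarith
end

section
/- Let Φ = (Φ₁, Φ₂) : V → ℂ² be a holomorphic map satisfying max(|Φ₁(Z,W) − Z|, |Φ₂(Z,W) − W|) < ε for all (Z,W) ∈ V. Then Φ is injective on V'. -/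
open Metric Set Complex

/-- Arithmetic: convex combination stays in the V' inequalities. -/
private lemma comb_aux (α K L1 L2 P1 P2 Q1 Q2 s : ℝ) (hα : 0 < α) (hs0 : 0 ≤ s) (hs1 : s ≤ 1)
    (hp1 : (P1 - L1) / α + K < P2) (hp2 : P2 < L2)
    (hq1 : (Q1 - L1) / α + K < Q2) (hq2 : Q2 < L2) :
    ((P1 + s * (Q1 - P1)) - L1) / α + K < P2 + s * (Q2 - P2) ∧ P2 + s * (Q2 - P2) < L2 := by
  have hp1' : P1 - L1 + K * α < P2 * α := by
    have := (div_lt_iff₀ hα).mp (by linarith : (P1 - L1) / α < P2 - K)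
    nlinarith
  have hq1' : Q1 - L1 + K * α < Q2 * α := by
    have := (div_lt_iff₀ hα).mp (by linarith : (Q1 - L1) / α < Q2 - K)
    nlinarith
  constructor
  · rw [div_add' _ _ _ hα.ne', div_lt_iff₀ hα]
    rcases eq_or_lt_of_le hs0 with rfl | hs0'
    · linarith
    · nlinarith [mul_lt_mul_of_pos_left hq1' hs0',
        mul_le_mul_of_nonneg_left hp1'.le (by linarith : (0:ℝ) ≤ 1 - s)]
  · rcases eq_or_lt_of_le hs1 with hs1' | hs1'
    · subst hs1'; linarith
    · nlinarith [mul_lt_mul_of_pos_left hp2 (by linarith : (0:ℝ) < 1 - s),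
        mul_le_mul_of_nonneg_left hq2.le hs0]

/-- Arithmetic: a `2ε` perturbation of a point of V' lies in V. -/
private lemma pert_aux (α ε L1 L2 x1 x2 y1 y2 : ℝ) (hα : 0 < α) (hε : 0 < ε)
    (h1 : (x1 - L1) / α + 2 * ε * (1 + α) / α < x2) (h2 : x2 < L2 - 2 * ε)
    (e1 : |y1 - x1| ≤ 2 * ε) (e2 : |y2 - x2| ≤ 2 * ε) :
    (y1 - L1) / α < y2 ∧ y2 < L2 := by
  rw [← add_div, div_lt_iff₀ hα] at h1
  rw [abs_le] at e1 e2
  constructor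
  · rw [div_lt_iff₀ hα]; nlinarith
  · linarith [e2.2]

/-- Key one-variable estimate: a function bounded by `ε` and holomorphic on a
`2ε`-neighborhood of `[0, M]` moves the endpoints' difference by at most `M/2`. -/
private lemma key_aux (ε M : ℝ) (hε : 0 < ε) (hM : 0 ≤ M) (f : ℂ → ℂ) (U : Set ℂ)
    (hU : IsOpen U) (hf : DifferentiableOn ℂ f U) (hb : ∀ z ∈ U, ‖f z‖ ≤ ε)
    (hseg : ∀ t : ℝ, t ∈ Set.Icc 0 M → Metric.closedBall (t : ℂ) (2 * ε) ⊆ U) :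
    ‖f (M : ℂ) - f 0‖ ≤ 1 / 2 * M := by
  have h2ε : (0:ℝ) < 2 * ε := by linarith
  have hball : ∀ t : ℝ, t ∈ Set.Icc 0 M → ‖deriv f (t : ℂ)‖ ≤ 1 / 2 := by
    intro t ht
    have hsub := hseg t ht
    have hd : DiffContOnCl ℂ f (ball (t : ℂ) (2 * ε)) := hf.diffContOnCl_ball hsub
    have hC : ∀ z ∈ sphere (t : ℂ) (2 * ε), ‖f z‖ ≤ ε := fun z hz =>
      hb z (hsub (sphere_subset_closedBall hz))
    have := Complex.norm_deriv_le_of_forall_mem_sphere_norm_le h2ε hd hC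
    calc ‖deriv f (t : ℂ)‖ ≤ ε / (2 * ε) := this
      _ = 1 / 2 := by rw [div_eq_div_iff h2ε.ne' two_ne_zero]; ring
  have hmem : ∀ t : ℝ, t ∈ Set.Icc 0 M → (t : ℂ) ∈ U := fun t ht =>
    hseg t ht (mem_closedBall_self h2ε.le)
  have hg : ∀ t ∈ Set.Icc (0:ℝ) M,
      HasDerivWithinAt (fun s : ℝ => f (s : ℂ)) (deriv f (t : ℂ)) (Set.Icc 0 M) t := by
    intro t ht
    exact ((hf.differentiableAt (hU.mem_nhds (hmem t ht))).hasDerivAt.comp_ofReal).hasDerivWithinAt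
  have := Convex.norm_image_sub_le_of_norm_hasDerivWithin_le hg (fun t ht => hball t ht)
    (convex_Icc (0:ℝ) M) (Set.left_mem_Icc.2 hM) (Set.right_mem_Icc.2 hM)
  simpa [Real.norm_eq_abs, _root_.abs_of_nonneg hM] using this

/-- Proposition 6.4 of Ueno: a holomorphic map `Φ` on
`V = {(Re Z − log r₁)/α < Re W < log r₂}` that is uniformly within `ε` of the
identity in each coordinate is injective on the smaller region
`V' = {(Re Z − log r₁)/α + 2ε(1+α)/α < Re W < log r₂ − 2ε}`. -/
theorem Phi_injective_on_V'
    (α ε r₁ r₂ : ℝ) (hα : 0 < α) (hε : 0 < ε) (hr₁ : 0 < r₁) (hr₂ : 0 < r₂)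
    (V V' : Set (ℂ × ℂ))
    (hV : V = {ZW : ℂ × ℂ |
      (ZW.1.re - Real.log r₁) / α < ZW.2.re ∧ ZW.2.re < Real.log r₂})
    (hV' : V' = {ZW : ℂ × ℂ |
      (ZW.1.re - Real.log r₁) / α + 2 * ε * (1 + α) / α < ZW.2.re ∧
      ZW.2.re < Real.log r₂ - 2 * ε})
    (Φ : ℂ × ℂ → ℂ × ℂ)
    (hΦhol : DifferentiableOn ℂ Φ V)
    (hΦclose : ∀ ZW ∈ V,
      max (‖(Φ ZW).1 - ZW.1‖) (‖(Φ ZW).2 - ZW.2‖) < ε) :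
    Set.InjOn Φ V' := by
  subst hV hV'
  intro p hp q hq hpq
  by_contra hne
  set d1 : ℂ := q.1 - p.1 with hd1
  set d2 : ℂ := q.2 - p.2 with hd2
  set M : ℝ := max ‖d1‖ ‖d2‖ with hMdef
  have hM0 : 0 < M := by
    rcases (not_and_or.mp (fun h : d1 = 0 ∧ d2 = 0 => hne (Prod.ext
      (by have := h.1; rw [hd1, sub_eq_zero] at this; exact this.symm)
      (by have := h.2; rw [hd2, sub_eq_zero] at this; exact this.symm)))) with h | h
    · exact lt_max_of_lt_left (norm_pos_iff.mpr h)
    · exact lt_max_of_lt_right (norm_pos_iff.mpr h)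
  have hMne : (M : ℂ) ≠ 0 := by exact_mod_cast (Complex.ofReal_ne_zero.mpr hM0.ne')
  set u1 : ℂ := d1 / (M : ℂ) with hu1
  set u2 : ℂ := d2 / (M : ℂ) with hu2
  have hu1abs : ‖u1‖ ≤ 1 := by
    rw [hu1, norm_div, Complex.norm_of_nonneg hM0.le, div_le_one hM0]
    exact le_max_left _ _
  have hu2abs : ‖u2‖ ≤ 1 := by
    rw [hu2, norm_div, Complex.norm_of_nonneg hM0.le, div_le_one hM0]
    exact le_max_right _ _
  set γ : ℂ → ℂ × ℂ := fun z => (p.1 + z * u1, p.2 + z * u2) with hγ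
  have hγ0 : γ 0 = p := by simp [hγ]
  have hγM : γ (M : ℂ) = q := by
    have h1 : (M : ℂ) * u1 = d1 := by rw [hu1, mul_div_cancel₀ _ hMne]
    have h2 : (M : ℂ) * u2 = d2 := by rw [hu2, mul_div_cancel₀ _ hMne]
    apply Prod.ext
    · show p.1 + (M : ℂ) * u1 = q.1
      rw [h1, hd1]; ring
    · show p.2 + (M : ℂ) * u2 = q.2
      rw [h2, hd2]; ring
  have hγdiff : Differentiable ℂ γ :=
    (((differentiable_id.mul_const u1).const_add p.1).prodMk
      ((differentiable_id.mul_const u2).const_add p.2))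
  have hVopen : IsOpen {ZW : ℂ × ℂ |
      (ZW.1.re - Real.log r₁) / α < ZW.2.re ∧ ZW.2.re < Real.log r₂} := by
    rw [Set.setOf_and]
    exact (isOpen_lt (by fun_prop) (by fun_prop)).inter (isOpen_lt (by fun_prop) continuous_const)
  set U : Set ℂ := γ ⁻¹' {ZW : ℂ × ℂ |
      (ZW.1.re - Real.log r₁) / α < ZW.2.re ∧ ZW.2.re < Real.log r₂} with hU
  have hUopen : IsOpen U := hVopen.preimage hγdiff.continuous
  -- re computation for γ at real points
  have hre : ∀ (t : ℝ) (d : ℂ), ((t : ℂ) * (d / (M : ℂ))).re = (t / M) * d.re := by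
    intro t d
    have : (t : ℂ) * (d / (M : ℂ)) = ((t / M : ℝ) : ℂ) * d := by
      push_cast; field_simp
    rw [this, Complex.re_ofReal_mul]
  have hseg : ∀ t : ℝ, t ∈ Set.Icc 0 M → Metric.closedBall (t : ℂ) (2 * ε) ⊆ U := by
    intro t ht z hz
    have hs0 : 0 ≤ t / M := div_nonneg ht.1 hM0.le
    have hs1 : t / M ≤ 1 := (div_le_one hM0).2 ht.2
    have hcomb := comb_aux α (2 * ε * (1 + α) / α) (Real.log r₁) (Real.log r₂ - 2 * ε)
      p.1.re p.2.re q.1.re q.2.re (t / M) hα hs0 hs1 hp.1 hp.2 hq.1 hq.2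
    have re1 : (γ (t : ℂ)).1.re = p.1.re + (t / M) * (q.1.re - p.1.re) := by
      simp only [hγ, Complex.add_re, hu1, hre, hd1, Complex.sub_re]
    have re2 : (γ (t : ℂ)).2.re = p.2.re + (t / M) * (q.2.re - p.2.re) := by
      simp only [hγ, Complex.add_re, hu2, hre, hd2, Complex.sub_re]
    have e1 : |(γ z).1.re - (γ (t : ℂ)).1.re| ≤ 2 * ε := by
      have : (γ z).1 - (γ (t : ℂ)).1 = (z - (t : ℂ)) * u1 := by simp only [hγ]; ring
      calc |(γ z).1.re - (γ (t : ℂ)).1.re| = |((γ z).1 - (γ (t : ℂ)).1).re| := by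
            rw [Complex.sub_re]
        _ ≤ ‖(γ z).1 - (γ (t : ℂ)).1‖ := Complex.abs_re_le_norm _
        _ = ‖z - (t : ℂ)‖ * ‖u1‖ := by rw [this, norm_mul]
        _ ≤ 2 * ε * 1 := by
            apply mul_le_mul _ hu1abs (norm_nonneg _) (by linarith)
            simpa [Complex.dist_eq] using (mem_closedBall.mp hz)
        _ = 2 * ε := mul_one _
    have e2 : |(γ z).2.re - (γ (t : ℂ)).2.re| ≤ 2 * ε := by
      have : (γ z).2 - (γ (t : ℂ)).2 = (z - (t : ℂ)) * u2 := by simp only [hγ]; ring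
      calc |(γ z).2.re - (γ (t : ℂ)).2.re| = |((γ z).2 - (γ (t : ℂ)).2).re| := by
            rw [Complex.sub_re]
        _ ≤ ‖(γ z).2 - (γ (t : ℂ)).2‖ := Complex.abs_re_le_norm _
        _ = ‖z - (t : ℂ)‖ * ‖u2‖ := by rw [this, norm_mul]
        _ ≤ 2 * ε * 1 := by
            apply mul_le_mul _ hu2abs (norm_nonneg _) (by linarith)
            simpa [Complex.dist_eq] using (mem_closedBall.mp hz)
        _ = 2 * ε := mul_one _
    have := pert_aux α ε (Real.log r₁) (Real.log r₂) (γ (t : ℂ)).1.re (γ (t : ℂ)).2.re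
      (γ z).1.re (γ z).2.re hα hε (by rw [re1, re2]; exact hcomb.1)
      (by rw [re2]; exact hcomb.2) e1 e2
    exact this
  have hmaps : ∀ z ∈ U, γ z ∈ {ZW : ℂ × ℂ |
      (ZW.1.re - Real.log r₁) / α < ZW.2.re ∧ ZW.2.re < Real.log r₂} := fun z hz => hz
  have hcomp : DifferentiableOn ℂ (fun z => Φ (γ z)) U :=
    hΦhol.comp hγdiff.differentiableOn hmaps
  rcases le_total ‖d2‖ ‖d1‖ with hcase | hcase
  · have hMeq : M = ‖d1‖ := max_eq_left hcase
    set f : ℂ → ℂ := fun z => (Φ (γ z)).1 - (γ z).1 with hf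
    have hfd : DifferentiableOn ℂ f U :=
      hcomp.fst.sub (differentiable_fst.comp hγdiff).differentiableOn
    have hfb : ∀ z ∈ U, ‖f z‖ ≤ ε := fun z hz =>
      ((le_max_left _ _).trans (hΦclose _ hz).le)
    have hkey := key_aux ε M hε hM0.le f U hUopen hfd hfb hseg
    have heq : f (M : ℂ) - f 0 = p.1 - q.1 := by
      show (Φ (γ (M : ℂ))).1 - (γ (M : ℂ)).1 - ((Φ (γ 0)).1 - (γ 0).1) = p.1 - q.1
      rw [hγM, hγ0, hpq]; ring
    rw [heq] at hkey
    have : ‖p.1 - q.1‖ = M := by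
      rw [hMeq, hd1, ← norm_neg]; ring_nf
    rw [this] at hkey; linarith
  · have hMeq : M = ‖d2‖ := max_eq_right hcase
    set f : ℂ → ℂ := fun z => (Φ (γ z)).2 - (γ z).2 with hf
    have hfd : DifferentiableOn ℂ f U :=
      hcomp.snd.sub (differentiable_snd.comp hγdiff).differentiableOn
    have hfb : ∀ z ∈ U, ‖f z‖ ≤ ε := fun z hz =>
      ((le_max_right _ _).trans (hΦclose _ hz).le)
    have hkey := key_aux ε M hε hM0.le f U hUopen hfd hfb hseg
    have heq : f (M : ℂ) - f 0 = p.2 - q.2 := by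
      show (Φ (γ (M : ℂ))).2 - (γ (M : ℂ)).2 - ((Φ (γ 0)).2 - (γ 0).2) = p.2 - q.2
      rw [hγM, hγ0, hpq]; ring
    rw [heq] at hkey
    have : ‖p.2 - q.2‖ = M := by
      rw [hMeq, hd2, ← norm_neg]; ring_nf
    rw [this] at hkey; linarith
end
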